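/- Two-stage reparameterization: with ε ∼ π₁(ε|θ) = s(ε)g(h(ε,θ)|θ)/r(h(ε,θ)|θ) and v ∼ π₂(v) independent, and a measurable transformation T such that T(ω, v; θ) with ω ∼ g(·|θ), v ∼ π₂ has distribution q(·|θ), one has E_{(ε,v)∼π₁⊗π₂}[f(T(h(ε,θ), v; θ))] = E_{q(z|θ)}[f(z)] for all bounded measurable f. -/

import Mathlib

open MeasureTheory

lemma map_withDensity_comp {α β : Type*} [MeasurableSpace α] [MeasurableSpace β]
    (μ : Measure α) (h : α → β) (hh : Measurable h) (f : β → ENNReal) (hf : Measurable f) :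
    Measure.map h (μ.withDensity fun x => f (h x)) = (Measure.map h μ).withDensity f := by
  ext t ht
  rw [Measure.map_apply hh ht, withDensity_apply _ (hh ht), withDensity_apply _ ht,
    Measure.restrict_map hh ht, lintegral_map hf hh]

/-- Two-stage reparameterization: with `ε ∼ π₁(ε) = s(ε)g(h(ε))/r(h(ε))` and
`v ∼ π₂` independent, and a measurable transformation `T` such that `T(ω, v)` with
`ω ∼ g`, `v ∼ π₂` has distribution `q`, one has
`E_{(ε,v)∼π₁⊗π₂}[f(T(h(ε), v))] = E_{q}[f(z)]` for all bounded measurable `f`. -/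
theorem stmt_8
    {V : Type*} [MeasurableSpace V]
    (s r g : ℝ → ℝ) (h : ℝ → ℝ) (f : ℝ → ℝ)
    (π₂ : Measure V) [IsProbabilityMeasure π₂]
    (T : ℝ → V → ℝ)
    (hs : Measurable s) (hr : Measurable r) (hg : Measurable g) (hh : Measurable h)
    (hf : Measurable f) (hT : Measurable (Function.uncurry T))
    (hs0 : ∀ ε, 0 ≤ s ε) (hr0 : ∀ ω, 0 ≤ r ω) (hg0 : ∀ ω, 0 ≤ g ω)
    (hs1 : ∫ ε, s ε = 1) (hr1 : ∫ ω, r ω = 1) (hg1 : ∫ ω, g ω = 1)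
    (hgr : ∀ ω, 0 < g ω → 0 < r ω)
    -- h pushes the density s forward to the proposal density r
    (hpush : Measure.map h (volume.withDensity fun ε => ENNReal.ofReal (s ε)) =
      volume.withDensity fun ω => ENNReal.ofReal (r ω))
    -- f is bounded
    (hbd : ∃ C, ∀ x, |f x| ≤ C)
    -- π₁ is the density of the accepted sample
    (π₁ : ℝ → ℝ) (hπ₁ : ∀ ε, π₁ ε = s ε * g (h ε) / r (h ε))
    -- q is the pushforward of g ⊗ π₂ under (ω, v) ↦ T ω v
    (q : Measure ℝ) [IsProbabilityMeasure q]
    (hq : Measure.map (fun p : ℝ × V => T p.1 p.2)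
        (((volume.withDensity fun ω => ENNReal.ofReal (g ω)).prod π₂)) = q) :
    ∫ p : ℝ × V, f (T (h p.1) p.2)
        ∂(((volume.withDensity fun ε => ENNReal.ofReal (π₁ ε)).prod π₂)) =
      ∫ z, f z ∂q := by
  -- the ratio density
  set w : ℝ → ENNReal := fun ω => ENNReal.ofReal (g ω / r ω) with hw
  have hwmeas : Measurable w := (hg.div hr).ennreal_ofReal
  -- key: map h (withDensity π₁) = withDensity g
  have hkey : Measure.map h (volume.withDensity fun ε => ENNReal.ofReal (π₁ ε)) =
      volume.withDensity fun ω => ENNReal.ofReal (g ω) := by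
    have hdens : (fun ε => ENNReal.ofReal (π₁ ε)) =
        fun ε => ENNReal.ofReal (s ε) * w (h ε) := by
      funext ε
      rw [hπ₁ ε, mul_div_assoc, ENNReal.ofReal_mul (hs0 ε)]
    rw [hdens]
    have := withDensity_mul (μ := (volume : Measure ℝ))
      (f := fun ε => ENNReal.ofReal (s ε)) (g := fun ε => w (h ε))
      hs.ennreal_ofReal (hwmeas.comp hh)
    have heq : (volume.withDensity fun ε => ENNReal.ofReal (s ε) * w (h ε)) =
        ((volume.withDensity fun ε => ENNReal.ofReal (s ε)).withDensity fun ε => w (h ε)) := by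
      rw [← this]; rfl
    rw [heq, map_withDensity_comp _ h hh w hwmeas, hpush, ← withDensity_mul _
      hr.ennreal_ofReal hwmeas]
    congr 1
    funext ω
    show ENNReal.ofReal (r ω) * ENNReal.ofReal (g ω / r ω) = ENNReal.ofReal (g ω)
    rcases eq_or_lt_of_le (hr0 ω) with hz | hpos
    · have hg0' : g ω = 0 := by
        by_contra hne
        have : 0 < g ω := lt_of_le_of_ne (hg0 ω) (Ne.symm hne)
        exact absurd (hgr ω this) (by rw [← hz]; exact lt_irrefl 0)
      simp [← hz, hg0']
    · rw [← ENNReal.ofReal_mul (hr0 ω), mul_div_cancel₀ _ (ne_of_gt hpos)]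
  -- product pushforward
  have hprod : Measure.map (Prod.map h id)
      ((volume.withDensity fun ε => ENNReal.ofReal (π₁ ε)).prod π₂) =
      (volume.withDensity fun ω => ENNReal.ofReal (g ω)).prod π₂ := by
    rw [← Measure.map_prod_map _ _ hh measurable_id, hkey, Measure.map_id]
  -- rewrite the integral
  have h1 : ∫ p : ℝ × V, f (T (h p.1) p.2)
      ∂((volume.withDensity fun ε => ENNReal.ofReal (π₁ ε)).prod π₂) =
      ∫ p : ℝ × V, f (T p.1 p.2)
      ∂((volume.withDensity fun ω => ENNReal.ofReal (g ω)).prod π₂) := by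
    rw [← hprod]
    exact (integral_map (φ := Prod.map h id) (f := fun p : ℝ × V => f (T p.1 p.2))
      (hh.prodMap measurable_id).aemeasurable
      ((hf.comp hT).aestronglyMeasurable)).symm
  rw [h1, ← hq]
  exact (integral_map (φ := fun p : ℝ × V => T p.1 p.2) (f := f)
    hT.aemeasurable hf.aestronglyMeasurable).symm
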